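/- Proposition (d-fold convolution, general a and b): let a, b ≥ 1 be integers, let c : ℕ → ℚ be a sequence, and define p̂(m,ℓ) := (1/(am+(b−1)ℓ+1))·C(am+(b−1)ℓ+1, ℓ)·P_c(m,ℓ) for m, ℓ ∈ ℕ. Then for all integers d ≥ 1 and all n, k ∈ ℕ, ∑ p̂(m_1,ℓ_1)···p̂(m_d,ℓ_d) = (d/(an+(b−1)k+d))·C(an+(b−1)k+d, k)·P_c(n,k), where the sum ranges over all d-tuples (ℓ_1,…,ℓ_d) of nonnegative integers with ℓ_1+⋯+ℓ_d = k and all d-tuples (m_1,…,m_d) of nonnegative integers with m_1+⋯+m_d = n. -/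

import Mathlib

/-- Weighted composition sum `P_c(n,k) = ∑ c_{m_1}⋯c_{m_k}` over compositions of `n`
into `k` positive parts; equals `(k!/n!)·B_{n,k}(1!c_1, 2!c_2, …)`. -/
def Pc (c : ℕ → ℚ) (n k : ℕ) : ℚ :=
  ∑ f ∈ (Finset.Nat.antidiagonalTuple k n).filter (fun f => ∀ i, 0 < f i),
    ∏ i, c (f i)

/-- Decomposition of a sum over `(k+1)`-tuples via `Fin.cons`. -/
lemma sum_adT_succ (k n : ℕ) (f : (Fin (k+1) → ℕ) → ℚ) :
    ∑ x ∈ Finset.Nat.antidiagonalTuple (k+1) n, f x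
      = ∑ p ∈ Finset.HasAntidiagonal.antidiagonal n,
          ∑ x ∈ Finset.Nat.antidiagonalTuple k p.2, f (Fin.cons p.1 x) := by
  rw [Finset.sum_sigma']
  refine Finset.sum_nbij' (fun y => ⟨(y 0, ∑ i, Fin.tail y i), Fin.tail y⟩)
    (fun z => Fin.cons z.1.1 z.2) ?_ ?_ ?_ ?_ ?_
  · intro y hy
    rw [Finset.Nat.mem_antidiagonalTuple] at hy
    simp only [Finset.mem_sigma, Finset.HasAntidiagonal.mem_antidiagonal,
      Finset.Nat.mem_antidiagonalTuple, and_true]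
    rw [← hy, Fin.sum_univ_succ]
    rfl
  · intro z hz
    simp only [Finset.mem_sigma, Finset.HasAntidiagonal.mem_antidiagonal,
      Finset.Nat.mem_antidiagonalTuple] at hz ⊢
    rw [Fin.sum_univ_succ, Fin.cons_zero]
    simp only [Fin.cons_succ]
    rw [show (∑ i : Fin k, z.2 i) = z.1.2 from hz.2]
    exact hz.1
  · intro y _
    exact Fin.cons_self_tail y
  · intro z hz
    simp only [Finset.mem_sigma, Finset.HasAntidiagonal.mem_antidiagonal,
      Finset.Nat.mem_antidiagonalTuple] at hz
    rw [Fin.tail_cons, Fin.cons_zero, show (∑ i : Fin k, z.2 i) = z.1.2 from hz.2]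
  · intro y _
    rw [Fin.cons_self_tail]

lemma Pc_zero_right (c : ℕ → ℚ) (n : ℕ) : Pc c n 0 = if n = 0 then 1 else 0 := by
  cases n with
  | zero =>
    rw [Pc, Finset.Nat.antidiagonalTuple_zero_zero]
    rw [Finset.filter_singleton, if_pos (fun i => i.elim0)]
    simp
  | succ n =>
    rw [Pc, Finset.Nat.antidiagonalTuple_zero_succ]
    simp

lemma Pc_eq_zero_of_lt (c : ℕ → ℚ) {n k : ℕ} (h : n < k) : Pc c n k = 0 := by
  rw [Pc]
  refine Finset.sum_eq_zero ?_ |>.trans rfl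
  intro x hx
  exfalso
  rw [Finset.mem_filter, Finset.Nat.mem_antidiagonalTuple] at hx
  have : k ≤ n := by
    calc k = ∑ _i : Fin k, 1 := by simp
    _ ≤ ∑ i, x i := Finset.sum_le_sum (fun i _ => hx.2 i)
    _ = n := hx.1
  omega

lemma sum_range_if_Icc (n : ℕ) (g : ℕ → ℚ) :
    ∑ i ∈ Finset.range (n+1), (if 0 < i then g i else 0) = ∑ i ∈ Finset.Icc 1 n, g i := by
  rw [← Finset.sum_filter]
  congr 1
  ext i
  simp only [Finset.mem_filter, Finset.mem_range, Finset.mem_Icc]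
  omega

/-- Peeling the first part of a composition, with a weight `w` on the first part. -/
lemma Pc_cons (c : ℕ → ℚ) (w : ℕ → ℚ) (n k : ℕ) :
    ∑ x ∈ (Finset.Nat.antidiagonalTuple (k+1) n).filter (fun f => ∀ i, 0 < f i),
        (w (x 0) * ∏ l, c (x l))
      = ∑ j ∈ Finset.Icc 1 n, w j * c j * Pc c (n-j) k := by
  rw [Finset.sum_filter, sum_adT_succ]
  have key : ∀ p ∈ Finset.HasAntidiagonal.antidiagonal n,
      (∑ x ∈ Finset.Nat.antidiagonalTuple k p.2,
        if (∀ i, 0 < (Fin.cons p.1 x : Fin (k+1) → ℕ) i)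
          then w ((Fin.cons p.1 x : Fin (k+1) → ℕ) 0) * ∏ l, c ((Fin.cons p.1 x : Fin (k+1) → ℕ) l) else 0)
      = if 0 < p.1 then w p.1 * c p.1 * Pc c p.2 k else 0 := by
    intro p _
    by_cases hp : 0 < p.1
    · rw [if_pos hp, Pc, Finset.sum_filter, Finset.mul_sum]
      refine Finset.sum_congr rfl fun x _ => ?_
      simp only [Fin.forall_fin_succ, Fin.cons_zero, Fin.cons_succ, Fin.prod_univ_succ, hp,
        true_and]
      rw [mul_ite, mul_zero]
      congr 1
      ring
    · rw [if_neg hp]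
      refine Finset.sum_eq_zero fun x _ => ?_
      rw [if_neg]
      intro h
      exact hp (by simpa using h 0)
  rw [Finset.sum_congr rfl key, Finset.Nat.sum_antidiagonal_eq_sum_range_succ_mk,
    sum_range_if_Icc]

lemma Pc_succ (c : ℕ → ℚ) (n k : ℕ) :
    Pc c n (k+1) = ∑ j ∈ Finset.Icc 1 n, c j * Pc c (n-j) k := by
  have := Pc_cons c (fun _ => 1) n k
  simp only [one_mul] at this
  rw [Pc, this]

lemma Pc_coord (c : ℕ → ℚ) (n k : ℕ) (i : Fin (k+1)) :
    ∑ x ∈ (Finset.Nat.antidiagonalTuple (k+1) n).filter (fun f => ∀ i, 0 < f i),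
        ((x i : ℚ) * ∏ l, c (x l))
      = ∑ x ∈ (Finset.Nat.antidiagonalTuple (k+1) n).filter (fun f => ∀ i, 0 < f i),
        ((x 0 : ℚ) * ∏ l, c (x l)) := by
  set σ := Equiv.swap (0 : Fin (k+1)) i with hσ
  have hmem : ∀ x : Fin (k+1) → ℕ,
      x ∈ (Finset.Nat.antidiagonalTuple (k+1) n).filter (fun f => ∀ i, 0 < f i) →
      (x ∘ σ) ∈ (Finset.Nat.antidiagonalTuple (k+1) n).filter (fun f => ∀ i, 0 < f i) := by
    intro x hx
    rw [Finset.mem_filter, Finset.Nat.mem_antidiagonalTuple] at hx ⊢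
    refine ⟨?_, fun l => hx.2 (σ l)⟩
    rw [show (∑ l, (x ∘ σ) l) = ∑ l, x (σ l) from rfl, Equiv.sum_comp σ x]
    exact hx.1
  refine Finset.sum_nbij' (fun x => x ∘ σ) (fun x => x ∘ σ) hmem hmem ?_ ?_ ?_
  · intro x _
    funext l
    simp only [Function.comp_apply, hσ, Equiv.swap_apply_self]
  · intro x _
    funext l
    simp only [Function.comp_apply, hσ, Equiv.swap_apply_self]
  · intro x _
    simp only [Function.comp_apply]
    rw [show σ 0 = i by simp [hσ]]
    congr 1
    exact (Equiv.prod_comp σ fun l => c (x l)).symm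

lemma Pc_weight (c : ℕ → ℚ) (n k : ℕ) :
    (n : ℚ) * Pc c n (k+1) = (k+1 : ℚ) * ∑ j ∈ Finset.Icc 1 n, (j : ℚ) * c j * Pc c (n-j) k := by
  have h0 := Pc_cons c (fun j => (j : ℚ)) n k
  rw [← h0]
  rw [Pc, Finset.mul_sum]
  have : ∀ x ∈ (Finset.Nat.antidiagonalTuple (k+1) n).filter (fun f => ∀ i, 0 < f i),
      (n : ℚ) * ∏ l, c (x l) = ∑ i : Fin (k+1), ((x i : ℚ) * ∏ l, c (x l)) := by
    intro x hx
    rw [Finset.mem_filter, Finset.Nat.mem_antidiagonalTuple] at hx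
    rw [← Finset.sum_mul]
    congr 1
    rw [← hx.1]
    push_cast
    rfl
  rw [Finset.sum_congr rfl this, Finset.sum_comm]
  rw [Finset.sum_congr rfl (fun i _ => Pc_coord c n k i)]
  rw [Finset.sum_const, Finset.card_univ, Fintype.card_fin, nsmul_eq_mul]
  push_cast
  ring

/-- In the generating-function picture, `Fq a b c D n k = [x^n t^k] Y^D` where
`Y = 1 + t ∑_j c_j x^j Y^(a j + b - 1)`. -/
noncomputable def Fq (a b : ℕ) (c : ℕ → ℚ) (D n k : ℕ) : ℚ :=
  if D = 0 then (if n = 0 ∧ k = 0 then 1 else 0)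
  else ((D : ℚ) / ((a*n + (b-1)*k + D : ℕ) : ℚ)) *
    (((a*n + (b-1)*k + D).choose k : ℕ) : ℚ) * Pc c n k

lemma Fq_of_ne (a b : ℕ) (c : ℕ → ℚ) {D : ℕ} (hD : D ≠ 0) (n k : ℕ) :
    Fq a b c D n k = ((D : ℚ) / ((a*n + (b-1)*k + D : ℕ) : ℚ)) *
      (((a*n + (b-1)*k + D).choose k : ℕ) : ℚ) * Pc c n k := if_neg hD

lemma Fq_k_ne (a b : ℕ) (c : ℕ → ℚ) (D : ℕ) (n : ℕ) {k : ℕ} (hk : k ≠ 0) :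
    Fq a b c D n k = ((D : ℚ) / ((a*n + (b-1)*k + D : ℕ) : ℚ)) *
      (((a*n + (b-1)*k + D).choose k : ℕ) : ℚ) * Pc c n k := by
  rcases Nat.eq_zero_or_pos D with hD | hD
  · subst hD
    rw [Fq, if_pos rfl, if_neg (by tauto)]
    simp
  · exact Fq_of_ne a b c (Nat.pos_iff_ne_zero.mp hD) n k

lemma Fq_k0 (a b : ℕ) (c : ℕ → ℚ) (D m : ℕ) :
    Fq a b c D m 0 = if m = 0 then 1 else 0 := by
  rcases Nat.eq_zero_or_pos D with hD | hD
  · subst hD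
    rw [Fq, if_pos rfl]
    simp
  · rw [Fq_of_ne a b c (Nat.pos_iff_ne_zero.mp hD)]
    rcases Nat.eq_zero_or_pos m with hm | hm
    · subst hm
      rw [if_pos rfl]
      simp only [Nat.mul_zero, Nat.zero_add, Nat.choose_zero_right, Nat.cast_one, mul_one]
      rw [Pc_zero_right, if_pos rfl, mul_one, div_self]
      exact Nat.cast_ne_zero.mpr (Nat.pos_iff_ne_zero.mp hD)
    · rw [if_neg (by omega), Pc_zero_right, if_neg (by omega), mul_zero]

lemma Fq_rec (a b : ℕ) (ha : 1 ≤ a) (hb : 1 ≤ b) (c : ℕ → ℚ) (D n k : ℕ) :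
    Fq a b c (D+1) n (k+1)
      = Fq a b c D n (k+1) + ∑ j ∈ Finset.Icc 1 n, c j * Fq a b c (a*j + (b-1) + D) (n-j) k := by
  by_cases hnk : n < k + 1
  · -- everything vanishes
    have hz : Pc c n (k+1) = 0 := Pc_eq_zero_of_lt c hnk
    rw [Fq_of_ne a b c (Nat.succ_ne_zero D), hz, mul_zero,
      Fq_k_ne a b c D n (Nat.succ_ne_zero k), hz, mul_zero, zero_add]
    refine (Finset.sum_eq_zero fun j hj => ?_).symm
    rw [Finset.mem_Icc] at hj
    have hE : a*j + (b-1) + D ≠ 0 := by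
      have : 1 ≤ a * j := Nat.one_le_iff_ne_zero.mpr (Nat.mul_ne_zero (by omega) (by omega))
      omega
    rw [Fq_of_ne a b c hE, Pc_eq_zero_of_lt c (by omega), mul_zero, mul_zero]
  · push_neg at hnk
    set B := b - 1 with hB
    set m := a*n + B*(k+1) + D with hm
    have hn1 : 1 ≤ n := le_trans (Nat.succ_le_succ (Nat.zero_le k)) hnk
    have hnm : n ≤ a * n := Nat.le_mul_of_pos_left n (by omega)
    have hkm : k + 1 ≤ m := by omega
    have hm1 : 1 ≤ m := by omega
    -- rewrite all Fq's
    have e1 : a*n + B*(k+1) + (D+1) = m + 1 := by omega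
    rw [Fq_of_ne a b c (Nat.succ_ne_zero D), Fq_k_ne a b c D n (Nat.succ_ne_zero k), ← hB, e1,
      ← hm]
    have eterm : ∀ j ∈ Finset.Icc 1 n,
        c j * Fq a b c (a*j + B + D) (n-j) k
          = (((m.choose k : ℕ) : ℚ) / (m : ℚ)) *
              ((a : ℚ) * ((j : ℚ) * c j * Pc c (n-j) k)
                + ((B : ℚ) + (D : ℚ)) * (c j * Pc c (n-j) k)) := by
      intro j hj
      rw [Finset.mem_Icc] at hj
      have hE : a*j + B + D ≠ 0 := by
        have : 1 ≤ a * j := Nat.one_le_iff_ne_zero.mpr (Nat.mul_ne_zero (by omega) (by omega))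
        omega
      have e2 : a*(n-j) + B*k + (a*j + B + D) = m := by
        have h3 : a*(n-j) + a*j = a*n := by
          rw [← Nat.mul_add]
          congr 1
          omega
        have h4 : B*k + B = B*(k+1) := by ring
        omega
      rw [Fq_of_ne a b c hE, e2]
      have hmne : ((m : ℕ) : ℚ) ≠ 0 := Nat.cast_ne_zero.mpr (by omega)
      field_simp
      push_cast
      ring
    rw [Finset.sum_congr rfl eterm, ← Finset.mul_sum, Finset.sum_add_distrib,
      ← Finset.mul_sum, ← Finset.mul_sum]
    -- now use the two Pc identities
    have hPs := Pc_succ c n k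
    have hPw := Pc_weight c n k
    set S1 := ∑ j ∈ Finset.Icc 1 n, c j * Pc c (n-j) k with hS1
    set S2 := ∑ j ∈ Finset.Icc 1 n, (j : ℚ) * c j * Pc c (n-j) k with hS2
    -- choose identities
    have hc1 : ((m+1).choose (k+1) : ℚ) * ((k : ℚ)+1) = ((m : ℚ)+1) * (m.choose k : ℚ) := by
      have := Nat.add_one_mul_choose_eq m k
      have h := congrArg (Nat.cast : ℕ → ℚ) this
      push_cast at h
      linarith
    have hc2 : (m.choose (k+1) : ℚ) * ((k : ℚ)+1) = (m.choose k : ℚ) * ((m : ℚ) - (k : ℚ)) := by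
      have h := congrArg (Nat.cast : ℕ → ℚ) (Nat.choose_succ_right_eq m k)
      push_cast [Nat.cast_sub (show k ≤ m by omega)] at h
      linarith
    have hmQ : ((m : ℕ) : ℚ) = (a : ℚ) * n + (B : ℚ) * ((k : ℚ)+1) + (D : ℚ) := by
      rw [hm]; push_cast; ring
    have hk1 : ((k : ℚ)+1) ≠ 0 := by positivity
    have hmQ0 : ((m : ℕ) : ℚ) ≠ 0 := Nat.cast_ne_zero.mpr (by omega)
    have hmQ1 : ((m : ℕ) : ℚ)+1 ≠ 0 := by positivity
    -- relation between S1, S2, Pc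
    have hS1P : S1 = Pc c n (k+1) := hPs.symm
    have hS2P : ((k : ℚ)+1) * S2 = (n : ℚ) * Pc c n (k+1) := by
      rw [hPw]
    rw [hS1P]
    have hS2v : S2 = (n : ℚ) * Pc c n (k+1) / ((k : ℚ)+1) := by
      rw [eq_div_iff hk1]; linarith
    rw [hS2v]
    have hch1 : (((m+1).choose (k+1) : ℕ) : ℚ) = ((m : ℚ)+1) * (m.choose k : ℚ) / ((k : ℚ)+1) := by
      rw [eq_div_iff hk1]; linarith
    have hch2 : ((m.choose (k+1) : ℕ) : ℚ) = (m.choose k : ℚ) * ((m : ℚ) - (k : ℚ)) / ((k : ℚ)+1) := by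
      rw [eq_div_iff hk1]; linarith
    rw [hch1, hch2]
    push_cast
    rw [hmQ]
    have hA : (a : ℚ) * n + (B : ℚ) * ((k : ℚ)+1) + (D : ℚ) ≠ 0 := by rw [← hmQ]; exact hmQ0
    have hA1 : (a : ℚ) * n + (B : ℚ) * ((k : ℚ)+1) + (D : ℚ) + 1 ≠ 0 := by
      rw [← hmQ]; exact hmQ1
    field_simp
    ring

lemma sum_antidiagonal_collapse (n : ℕ) (g : ℕ → ℚ) :
    ∑ q ∈ Finset.HasAntidiagonal.antidiagonal n, (if q.1 = 0 then g q.2 else 0) = g n := by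
  rw [Finset.Nat.sum_antidiagonal_eq_sum_range_succ_mk, Finset.sum_eq_single 0]
  · simp
  · intro i _ hne
    rw [if_neg hne]
  · intro h
    exact absurd (Finset.mem_range.mpr (Nat.succ_pos n)) h

lemma swap_sum (n : ℕ) (F : ℕ → ℕ → ℕ → ℚ) :
    ∑ q ∈ Finset.HasAntidiagonal.antidiagonal n, ∑ j ∈ Finset.Icc 1 q.1, F j (q.1 - j) q.2
      = ∑ j ∈ Finset.Icc 1 n, ∑ q ∈ Finset.HasAntidiagonal.antidiagonal (n - j), F j q.1 q.2 := by
  rw [Finset.Nat.sum_antidiagonal_eq_sum_range_succ_mk]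
  have L1 : ∀ t ∈ Finset.range (n+1),
      (∑ j ∈ Finset.Icc 1 t, F j (t-j) (n-t))
        = ∑ j ∈ Finset.Icc 1 n, if j ≤ t then F j (t-j) (n-t) else 0 := by
    intro t ht
    rw [Finset.mem_range] at ht
    rw [← Finset.sum_filter]
    congr 1
    ext i
    simp only [Finset.mem_filter, Finset.mem_Icc]
    omega
  rw [Finset.sum_congr rfl L1, Finset.sum_comm]
  refine Finset.sum_congr rfl fun j hj => ?_
  rw [Finset.mem_Icc] at hj
  rw [Finset.Nat.sum_antidiagonal_eq_sum_range_succ_mk, ← Finset.sum_filter]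
  refine Finset.sum_nbij' (fun t => t - j) (fun r => j + r) ?_ ?_ ?_ ?_ ?_
  · intro t ht
    simp only [Finset.mem_filter, Finset.mem_range] at ht ⊢
    omega
  · intro r hr
    simp only [Finset.mem_filter, Finset.mem_range] at hr ⊢
    omega
  · intro t ht
    simp only [Finset.mem_filter, Finset.mem_range] at ht
    omega
  · intro r _
    omega
  · intro t ht
    simp only [Finset.mem_filter, Finset.mem_range] at ht
    have h1 : n - t = n - j - (t - j) := by omega
    rw [h1]

lemma conv2 (a b : ℕ) (ha : 1 ≤ a) (hb : 1 ≤ b) (c : ℕ → ℚ) :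
    ∀ k E D n, (∑ p ∈ Finset.HasAntidiagonal.antidiagonal k, ∑ q ∈ Finset.HasAntidiagonal.antidiagonal n,
        Fq a b c E q.1 p.1 * Fq a b c D q.2 p.2) = Fq a b c (E+D) n k := by
  intro k
  induction k with
  | zero =>
    intro E D n
    rw [Finset.Nat.antidiagonal_zero, Finset.sum_singleton]
    have : ∀ q ∈ Finset.HasAntidiagonal.antidiagonal n,
        Fq a b c E q.1 (0:ℕ) * Fq a b c D q.2 (0:ℕ)
          = if q.1 = 0 then (if q.2 = 0 then 1 else 0) else 0 := by
      intro q _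
      rw [Fq_k0, Fq_k0]
      by_cases h1 : q.1 = 0 <;> by_cases h2 : q.2 = 0 <;> simp [h1, h2]
    rw [Finset.sum_congr rfl this, Fq_k0 a b c (E+D) n]
    exact sum_antidiagonal_collapse n (fun s => if s = 0 then (1:ℚ) else 0)
  | succ k ihk =>
    intro E
    induction E with
    | zero =>
      intro D n
      have h1 : ∀ p ∈ Finset.HasAntidiagonal.antidiagonal (k+1), ∀ q ∈ Finset.HasAntidiagonal.antidiagonal n,
          Fq a b c 0 q.1 p.1 * Fq a b c D q.2 p.2
            = if p.1 = 0 then (if q.1 = 0 then Fq a b c D q.2 p.2 else 0) else 0 := by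
        intro p _ q _
        rw [Fq, if_pos rfl]
        by_cases h1 : q.1 = 0 <;> by_cases h2 : p.1 = 0 <;> simp [h1, h2]
      rw [Finset.sum_congr rfl (fun p hp => Finset.sum_congr rfl (h1 p hp))]
      have h2 : ∀ p ∈ Finset.HasAntidiagonal.antidiagonal (k+1),
          (∑ q ∈ Finset.HasAntidiagonal.antidiagonal n,
            if p.1 = 0 then (if q.1 = 0 then Fq a b c D q.2 p.2 else 0) else 0)
          = if p.1 = 0 then Fq a b c D n p.2 else 0 := by
        intro p _
        by_cases h : p.1 = 0
        · simp only [h, if_true]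
          exact sum_antidiagonal_collapse n (fun s => Fq a b c D s p.2)
        · simp [h]
      rw [Finset.sum_congr rfl h2, Nat.zero_add]
      exact sum_antidiagonal_collapse (k+1) (fun s => Fq a b c D n s)
    | succ E ihE =>
      intro D n
      -- helper: collapse of the (0, k+1) term for any exponent E'
      have hcol : ∀ E' : ℕ, (∑ q ∈ Finset.HasAntidiagonal.antidiagonal n,
          Fq a b c E' q.1 0 * Fq a b c D q.2 (k+1)) = Fq a b c D n (k+1) := by
        intro E'
        have : ∀ q ∈ Finset.HasAntidiagonal.antidiagonal n,
            Fq a b c E' q.1 0 * Fq a b c D q.2 (k+1)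
              = if q.1 = 0 then Fq a b c D q.2 (k+1) else 0 := by
          intro q _
          rw [Fq_k0]
          by_cases h1 : q.1 = 0 <;> simp [h1]
        rw [Finset.sum_congr rfl this]
        exact sum_antidiagonal_collapse n (fun s => Fq a b c D s (k+1))
      rw [Finset.Nat.sum_antidiagonal_succ
        (f := fun p => ∑ q ∈ Finset.HasAntidiagonal.antidiagonal n,
          Fq a b c (E+1) q.1 p.1 * Fq a b c D q.2 p.2)]
      rw [hcol (E+1)]
      -- expand Fq (E+1) with the recurrence
      have hexp : ∀ p ∈ Finset.HasAntidiagonal.antidiagonal k, ∀ q ∈ Finset.HasAntidiagonal.antidiagonal n,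
          Fq a b c (E+1) q.1 (p.1+1) * Fq a b c D q.2 p.2
            = Fq a b c E q.1 (p.1+1) * Fq a b c D q.2 p.2
              + ∑ j ∈ Finset.Icc 1 q.1,
                  c j * Fq a b c (a*j + (b-1) + E) (q.1-j) p.1 * Fq a b c D q.2 p.2 := by
        intro p _ q _
        rw [Fq_rec a b ha hb c E q.1 p.1, add_mul, Finset.sum_mul]
      rw [Finset.sum_congr rfl (fun p hp => Finset.sum_congr rfl (hexp p hp))]
      simp only [Finset.sum_add_distrib]
      -- first piece: relate to ihE
      have hA : (∑ p ∈ Finset.HasAntidiagonal.antidiagonal k, ∑ q ∈ Finset.HasAntidiagonal.antidiagonal n,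
          Fq a b c E q.1 (p.1+1) * Fq a b c D q.2 p.2)
            = Fq a b c (E+D) n (k+1) - Fq a b c D n (k+1) := by
        have h1 := ihE D n
        rw [Finset.Nat.sum_antidiagonal_succ
          (f := fun p => ∑ q ∈ Finset.HasAntidiagonal.antidiagonal n,
            Fq a b c E q.1 p.1 * Fq a b c D q.2 p.2), hcol E] at h1
        linarith
      rw [hA]
      -- second piece
      have hBsum : (∑ p ∈ Finset.HasAntidiagonal.antidiagonal k, ∑ q ∈ Finset.HasAntidiagonal.antidiagonal n,
          ∑ j ∈ Finset.Icc 1 q.1,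
            c j * Fq a b c (a*j + (b-1) + E) (q.1-j) p.1 * Fq a b c D q.2 p.2)
          = ∑ j ∈ Finset.Icc 1 n, c j * Fq a b c (a*j + (b-1) + (E+D)) (n-j) k := by
        have hswap : ∀ p ∈ Finset.HasAntidiagonal.antidiagonal k,
            (∑ q ∈ Finset.HasAntidiagonal.antidiagonal n, ∑ j ∈ Finset.Icc 1 q.1,
              c j * Fq a b c (a*j + (b-1) + E) (q.1-j) p.1 * Fq a b c D q.2 p.2)
            = ∑ j ∈ Finset.Icc 1 n, ∑ q ∈ Finset.HasAntidiagonal.antidiagonal (n-j),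
              c j * Fq a b c (a*j + (b-1) + E) q.1 p.1 * Fq a b c D q.2 p.2 := by
          intro p _
          exact swap_sum n (fun j r s =>
            c j * Fq a b c (a*j + (b-1) + E) r p.1 * Fq a b c D s p.2)
        rw [Finset.sum_congr rfl hswap, Finset.sum_comm]
        refine Finset.sum_congr rfl fun j _ => ?_
        have : ∀ p ∈ Finset.HasAntidiagonal.antidiagonal k, ∀ q ∈ Finset.HasAntidiagonal.antidiagonal (n-j),
            c j * Fq a b c (a*j + (b-1) + E) q.1 p.1 * Fq a b c D q.2 p.2
              = c j * (Fq a b c (a*j + (b-1) + E) q.1 p.1 * Fq a b c D q.2 p.2) := by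
          intro p _ q _
          ring
        rw [Finset.sum_congr rfl (fun p hp => Finset.sum_congr rfl (this p hp))]
        simp only [← Finset.mul_sum]
        rw [ihk (a*j + (b-1) + E) D (n-j)]
        rw [add_assoc]
      rw [hBsum]
      have := Fq_rec a b ha hb c (E+D) n k
      have hidx : E + 1 + D = E + D + 1 := by omega
      rw [hidx, this]
      ring
/-- `p̂(m,ℓ) = (1/(am+(b-1)ℓ+1))·C(am+(b-1)ℓ+1, ℓ)·P_c(m,ℓ)`. -/
def phat (a b : ℕ) (c : ℕ → ℚ) (m ℓ : ℕ) : ℚ :=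
  (1 / ((a * m + (b - 1) * ℓ + 1 : ℕ) : ℚ)) *
    (((a * m + (b - 1) * ℓ + 1).choose ℓ : ℕ) : ℚ) * Pc c m ℓ

lemma phat_eq (a b : ℕ) (c : ℕ → ℚ) (m ℓ : ℕ) : phat a b c m ℓ = Fq a b c 1 m ℓ := by
  rw [phat, Fq_of_ne a b c one_ne_zero]
  norm_num

lemma main_aux (a b : ℕ) (ha : 1 ≤ a) (hb : 1 ≤ b) (c : ℕ → ℚ) :
    ∀ d, 1 ≤ d → ∀ n k,
      (∑ ℓs ∈ Finset.Nat.antidiagonalTuple d k,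
        ∑ ms ∈ Finset.Nat.antidiagonalTuple d n,
          ∏ i, phat a b c (ms i) (ℓs i)) = Fq a b c d n k := by
  intro d hd
  induction d, hd using Nat.le_induction with
  | base =>
    intro n k
    rw [Finset.Nat.antidiagonalTuple_one, Finset.sum_singleton,
      Finset.Nat.antidiagonalTuple_one, Finset.sum_singleton, Fin.prod_univ_one]
    simp only [Matrix.cons_val_zero]
    exact phat_eq a b c n k
  | succ d hd ih =>
    intro n k
    rw [sum_adT_succ d k (fun ℓs => ∑ ms ∈ Finset.Nat.antidiagonalTuple (d+1) n,
      ∏ i, phat a b c (ms i) (ℓs i))]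
    have step1 : ∀ p ∈ Finset.HasAntidiagonal.antidiagonal k, ∀ x ∈ Finset.Nat.antidiagonalTuple d p.2,
        (∑ ms ∈ Finset.Nat.antidiagonalTuple (d+1) n,
          ∏ i, phat a b c (ms i) ((Fin.cons p.1 x : Fin (d+1) → ℕ) i))
        = ∑ q ∈ Finset.HasAntidiagonal.antidiagonal n, phat a b c q.1 p.1 *
            ∑ y ∈ Finset.Nat.antidiagonalTuple d q.2, ∏ i, phat a b c (y i) (x i) := by
      intro p _ x _
      rw [sum_adT_succ d n (fun ms => ∏ i, phat a b c (ms i)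
        ((Fin.cons p.1 x : Fin (d+1) → ℕ) i))]
      refine Finset.sum_congr rfl fun q _ => ?_
      rw [Finset.mul_sum]
      refine Finset.sum_congr rfl fun y _ => ?_
      rw [Fin.prod_univ_succ]
      simp only [Fin.cons_zero, Fin.cons_succ]
    rw [Finset.sum_congr rfl (fun p hp => Finset.sum_congr rfl (step1 p hp))]
    have step2 : ∀ p ∈ Finset.HasAntidiagonal.antidiagonal k,
        (∑ x ∈ Finset.Nat.antidiagonalTuple d p.2, ∑ q ∈ Finset.HasAntidiagonal.antidiagonal n,
          phat a b c q.1 p.1 *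
            ∑ y ∈ Finset.Nat.antidiagonalTuple d q.2, ∏ i, phat a b c (y i) (x i))
        = ∑ q ∈ Finset.HasAntidiagonal.antidiagonal n, Fq a b c 1 q.1 p.1 * Fq a b c d q.2 p.2 := by
      intro p _
      rw [Finset.sum_comm]
      refine Finset.sum_congr rfl fun q _ => ?_
      rw [← Finset.mul_sum, ih q.2 p.2, phat_eq]
    rw [Finset.sum_congr rfl step2]
    have := conv2 a b ha hb c k 1 d n
    rw [this, Nat.add_comm 1 d]
/-- Proposition: `d`-fold convolution formula for general `a` and `b`. -/
theorem phat_dfold_convolution_general (a b : ℕ) (ha : 1 ≤ a) (hb : 1 ≤ b)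
    (c : ℕ → ℚ) (d : ℕ) (hd : 1 ≤ d) (n k : ℕ) :
    ∑ ℓs ∈ Finset.Nat.antidiagonalTuple d k,
      ∑ ms ∈ Finset.Nat.antidiagonalTuple d n,
        ∏ i, phat a b c (ms i) (ℓs i)
    = ((d : ℚ) / ((a * n + (b - 1) * k + d : ℕ) : ℚ)) *
        (((a * n + (b - 1) * k + d).choose k : ℕ) : ℚ) * Pc c n k := by
  rw [main_aux a b ha hb c d hd n k, Fq_of_ne a b c (by omega : d ≠ 0) n k]
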